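/- Let T₁,…,T₈ be the halved Gell-Mann matrices. Then the index-symmetrized cubic sum satisfies Σ_{I,J,K=1}^{8} [ (1/6)·Σ_{σ∈S₃} tr(T_{σ(I)}·T_{σ(J)}·T_{σ(K)}) ] · T_I·T_J·T_K = (5/18)·I₃, where for a permutation σ of the three index slots the notation T_{σ(I)}T_{σ(J)}T_{σ(K)} denotes the product with the indices I,J,K rearranged by σ, and I₃ is the 3×3 identity matrix. -/

import Mathlib

/-- The eight halved Gell-Mann matrices `T₁,…,T₈`. -/
noncomputable def gellMann : Fin 8 → Matrix (Fin 3) (Fin 3) ℂ :=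
  ![(1 / 2 : ℂ) • !![0, 1, 0; 1, 0, 0; 0, 0, 0],
    (1 / 2 : ℂ) • !![0, -Complex.I, 0; Complex.I, 0, 0; 0, 0, 0],
    (1 / 2 : ℂ) • !![1, 0, 0; 0, -1, 0; 0, 0, 0],
    (1 / 2 : ℂ) • !![0, 0, 1; 0, 0, 0; 1, 0, 0],
    (1 / 2 : ℂ) • !![0, 0, -Complex.I; 0, 0, 0; Complex.I, 0, 0],
    (1 / 2 : ℂ) • !![0, 0, 0; 0, 0, 1; 0, 1, 0],
    (1 / 2 : ℂ) • !![0, 0, 0; 0, 0, -Complex.I; 0, Complex.I, 0],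
    (1 / (2 * (Real.sqrt 3 : ℂ))) • !![1, 0, 0; 0, 1, 0; 0, 0, -2]]

structure Z4 where
  a : ℤ
  b : ℤ
  c : ℤ
  d : ℤ
deriving DecidableEq

namespace Z4
instance : Zero Z4 := ⟨⟨0,0,0,0⟩⟩
instance : One Z4 := ⟨⟨1,0,0,0⟩⟩
instance : Add Z4 := ⟨fun x y => ⟨x.a+y.a, x.b+y.b, x.c+y.c, x.d+y.d⟩⟩
instance : Neg Z4 := ⟨fun x => ⟨-x.a,-x.b,-x.c,-x.d⟩⟩
instance : Mul Z4 := ⟨fun x y =>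
  ⟨x.a*y.a - x.b*y.b + 3*(x.c*y.c) - 3*(x.d*y.d),
   x.a*y.b + x.b*y.a + 3*(x.c*y.d) + 3*(x.d*y.c),
   x.a*y.c + x.c*y.a - x.b*y.d - x.d*y.b,
   x.a*y.d + x.d*y.a + x.b*y.c + x.c*y.b⟩⟩

@[simp] theorem add_def (x y : Z4) : x + y = ⟨x.a+y.a, x.b+y.b, x.c+y.c, x.d+y.d⟩ := rfl
@[simp] theorem mul_def (x y : Z4) : x * y =
  ⟨x.a*y.a - x.b*y.b + 3*(x.c*y.c) - 3*(x.d*y.d),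
   x.a*y.b + x.b*y.a + 3*(x.c*y.d) + 3*(x.d*y.c),
   x.a*y.c + x.c*y.a - x.b*y.d - x.d*y.b,
   x.a*y.d + x.d*y.a + x.b*y.c + x.c*y.b⟩ := rfl
@[simp] theorem neg_def (x : Z4) : -x = ⟨-x.a,-x.b,-x.c,-x.d⟩ := rfl
@[simp] theorem zero_def : (0 : Z4) = ⟨0,0,0,0⟩ := rfl
@[simp] theorem one_def : (1 : Z4) = ⟨1,0,0,0⟩ := rfl

@[ext] theorem ext {x y : Z4} (ha : x.a = y.a) (hb : x.b = y.b) (hc : x.c = y.c) (hd : x.d = y.d) : x = y := by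
  cases x; cases y; simp_all

instance : CommRing Z4 where
  add_assoc x y z := by ext <;> simp <;> ring
  zero_add x := by ext <;> simp
  add_zero x := by ext <;> simp
  add_comm x y := by ext <;> simp <;> ring
  left_distrib x y z := by ext <;> simp <;> ring
  right_distrib x y z := by ext <;> simp <;> ring
  zero_mul x := by ext <;> simp
  mul_zero x := by ext <;> simp
  mul_assoc x y z := by ext <;> simp <;> ring
  one_mul x := by ext <;> simp
  mul_one x := by ext <;> simp
  neg_add_cancel x := by ext <;> simp
  mul_comm x y := by ext <;> simp <;> ring
  nsmul := nsmulRec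
  zsmul := zsmulRec

end Z4

open Z4 in
def gm : Fin 8 → Matrix (Fin 3) (Fin 3) Z4 :=
  ![!![⟨0,0,0,0⟩,⟨3,0,0,0⟩,⟨0,0,0,0⟩; ⟨3,0,0,0⟩,⟨0,0,0,0⟩,⟨0,0,0,0⟩; ⟨0,0,0,0⟩,⟨0,0,0,0⟩,⟨0,0,0,0⟩],
    !![⟨0,0,0,0⟩,⟨0,-3,0,0⟩,⟨0,0,0,0⟩; ⟨0,3,0,0⟩,⟨0,0,0,0⟩,⟨0,0,0,0⟩; ⟨0,0,0,0⟩,⟨0,0,0,0⟩,⟨0,0,0,0⟩],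
    !![⟨3,0,0,0⟩,⟨0,0,0,0⟩,⟨0,0,0,0⟩; ⟨0,0,0,0⟩,⟨-3,0,0,0⟩,⟨0,0,0,0⟩; ⟨0,0,0,0⟩,⟨0,0,0,0⟩,⟨0,0,0,0⟩],
    !![⟨0,0,0,0⟩,⟨0,0,0,0⟩,⟨3,0,0,0⟩; ⟨0,0,0,0⟩,⟨0,0,0,0⟩,⟨0,0,0,0⟩; ⟨3,0,0,0⟩,⟨0,0,0,0⟩,⟨0,0,0,0⟩],
    !![⟨0,0,0,0⟩,⟨0,0,0,0⟩,⟨0,-3,0,0⟩; ⟨0,0,0,0⟩,⟨0,0,0,0⟩,⟨0,0,0,0⟩; ⟨0,3,0,0⟩,⟨0,0,0,0⟩,⟨0,0,0,0⟩],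
    !![⟨0,0,0,0⟩,⟨0,0,0,0⟩,⟨0,0,0,0⟩; ⟨0,0,0,0⟩,⟨0,0,0,0⟩,⟨3,0,0,0⟩; ⟨0,0,0,0⟩,⟨3,0,0,0⟩,⟨0,0,0,0⟩],
    !![⟨0,0,0,0⟩,⟨0,0,0,0⟩,⟨0,0,0,0⟩; ⟨0,0,0,0⟩,⟨0,0,0,0⟩,⟨0,-3,0,0⟩; ⟨0,0,0,0⟩,⟨0,3,0,0⟩,⟨0,0,0,0⟩],
    !![⟨0,0,1,0⟩,⟨0,0,0,0⟩,⟨0,0,0,0⟩; ⟨0,0,0,0⟩,⟨0,0,1,0⟩,⟨0,0,0,0⟩; ⟨0,0,0,0⟩,⟨0,0,0,0⟩,⟨0,0,-2,0⟩]]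

def c8 : Fin 8 → Fin 8 → Fin 8 → Z4
  | 0, 0, 7 => ⟨0,0,108,0⟩
  | 0, 3, 5 => ⟨162,0,0,0⟩
  | 0, 4, 6 => ⟨162,0,0,0⟩
  | 0, 5, 3 => ⟨162,0,0,0⟩
  | 0, 6, 4 => ⟨162,0,0,0⟩
  | 0, 7, 0 => ⟨0,0,108,0⟩
  | 1, 1, 7 => ⟨0,0,108,0⟩
  | 1, 3, 6 => ⟨-162,0,0,0⟩
  | 1, 4, 5 => ⟨162,0,0,0⟩
  | 1, 5, 4 => ⟨162,0,0,0⟩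
  | 1, 6, 3 => ⟨-162,0,0,0⟩
  | 1, 7, 1 => ⟨0,0,108,0⟩
  | 2, 2, 7 => ⟨0,0,108,0⟩
  | 2, 3, 3 => ⟨162,0,0,0⟩
  | 2, 4, 4 => ⟨162,0,0,0⟩
  | 2, 5, 5 => ⟨-162,0,0,0⟩
  | 2, 6, 6 => ⟨-162,0,0,0⟩
  | 2, 7, 2 => ⟨0,0,108,0⟩
  | 3, 0, 5 => ⟨162,0,0,0⟩
  | 3, 1, 6 => ⟨-162,0,0,0⟩
  | 3, 2, 3 => ⟨162,0,0,0⟩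
  | 3, 3, 2 => ⟨162,0,0,0⟩
  | 3, 3, 7 => ⟨0,0,-54,0⟩
  | 3, 5, 0 => ⟨162,0,0,0⟩
  | 3, 6, 1 => ⟨-162,0,0,0⟩
  | 3, 7, 3 => ⟨0,0,-54,0⟩
  | 4, 0, 6 => ⟨162,0,0,0⟩
  | 4, 1, 5 => ⟨162,0,0,0⟩
  | 4, 2, 4 => ⟨162,0,0,0⟩
  | 4, 4, 2 => ⟨162,0,0,0⟩
  | 4, 4, 7 => ⟨0,0,-54,0⟩
  | 4, 5, 1 => ⟨162,0,0,0⟩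
  | 4, 6, 0 => ⟨162,0,0,0⟩
  | 4, 7, 4 => ⟨0,0,-54,0⟩
  | 5, 0, 3 => ⟨162,0,0,0⟩
  | 5, 1, 4 => ⟨162,0,0,0⟩
  | 5, 2, 5 => ⟨-162,0,0,0⟩
  | 5, 3, 0 => ⟨162,0,0,0⟩
  | 5, 4, 1 => ⟨162,0,0,0⟩
  | 5, 5, 2 => ⟨-162,0,0,0⟩
  | 5, 5, 7 => ⟨0,0,-54,0⟩
  | 5, 7, 5 => ⟨0,0,-54,0⟩
  | 6, 0, 4 => ⟨162,0,0,0⟩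
  | 6, 1, 3 => ⟨-162,0,0,0⟩
  | 6, 2, 6 => ⟨-162,0,0,0⟩
  | 6, 3, 1 => ⟨-162,0,0,0⟩
  | 6, 4, 0 => ⟨162,0,0,0⟩
  | 6, 6, 2 => ⟨-162,0,0,0⟩
  | 6, 6, 7 => ⟨0,0,-54,0⟩
  | 6, 7, 6 => ⟨0,0,-54,0⟩
  | 7, 0, 0 => ⟨0,0,108,0⟩
  | 7, 1, 1 => ⟨0,0,108,0⟩
  | 7, 2, 2 => ⟨0,0,108,0⟩
  | 7, 3, 3 => ⟨0,0,-54,0⟩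
  | 7, 4, 4 => ⟨0,0,-54,0⟩
  | 7, 5, 5 => ⟨0,0,-54,0⟩
  | 7, 6, 6 => ⟨0,0,-54,0⟩
  | 7, 7, 7 => ⟨0,0,-108,0⟩
  | _, _, _ => ⟨0,0,0,0⟩

def mul3 (A B : Matrix (Fin 3) (Fin 3) Z4) : Matrix (Fin 3) (Fin 3) Z4 :=
  !![A 0 0 * B 0 0 + A 0 1 * B 1 0 + A 0 2 * B 2 0,
     A 0 0 * B 0 1 + A 0 1 * B 1 1 + A 0 2 * B 2 1,
     A 0 0 * B 0 2 + A 0 1 * B 1 2 + A 0 2 * B 2 2;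
     A 1 0 * B 0 0 + A 1 1 * B 1 0 + A 1 2 * B 2 0,
     A 1 0 * B 0 1 + A 1 1 * B 1 1 + A 1 2 * B 2 1,
     A 1 0 * B 0 2 + A 1 1 * B 1 2 + A 1 2 * B 2 2;
     A 2 0 * B 0 0 + A 2 1 * B 1 0 + A 2 2 * B 2 0,
     A 2 0 * B 0 1 + A 2 1 * B 1 1 + A 2 2 * B 2 1,
     A 2 0 * B 0 2 + A 2 1 * B 1 2 + A 2 2 * B 2 2]

def tr3 (A : Matrix (Fin 3) (Fin 3) Z4) : Z4 := A 0 0 + A 1 1 + A 2 2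

def csmul (c : Z4) (A : Matrix (Fin 3) (Fin 3) Z4) : Matrix (Fin 3) (Fin 3) Z4 :=
  if c = ⟨0,0,0,0⟩ then !![0,0,0;0,0,0;0,0,0] else
  !![c * A 0 0, c * A 0 1, c * A 0 2;
     c * A 1 0, c * A 1 1, c * A 1 2;
     c * A 2 0, c * A 2 1, c * A 2 2]


noncomputable def phi : Z4 →+* ℂ where
  toFun x := (x.a : ℂ) + (x.b : ℂ) * Complex.I + (x.c : ℂ) * (Real.sqrt 3 : ℝ)
      + (x.d : ℂ) * Complex.I * (Real.sqrt 3 : ℝ)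
  map_one' := by simp
  map_zero' := by simp
  map_add' x y := by simp; push_cast; ring
  map_mul' x y := by
    have h3 : ((Real.sqrt 3 : ℝ) : ℂ) * ((Real.sqrt 3 : ℝ) : ℂ) = 3 := by
      norm_cast
      rw [Real.mul_self_sqrt (by norm_num)]
    have hi : Complex.I * Complex.I = -1 := Complex.I_mul_I
    simp only [Z4.mul_def]
    push_cast
    linear_combination (-((x.b:ℂ)*(y.b:ℂ) + ((x.b:ℂ)*(y.d:ℂ)+(x.d:ℂ)*(y.b:ℂ))*((Real.sqrt 3:ℝ):ℂ)
        + (x.d:ℂ)*(y.d:ℂ)*((Real.sqrt 3:ℝ):ℂ)*((Real.sqrt 3:ℝ):ℂ))) * hi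
      + (-((x.c:ℂ)*(y.c:ℂ) + ((x.c:ℂ)*(y.d:ℂ)+(x.d:ℂ)*(y.c:ℂ))*Complex.I - (x.d:ℂ)*(y.d:ℂ))) * h3

theorem hs3 : (Real.sqrt 3 : ℂ) * (Real.sqrt 3 : ℂ) = 3 := by
  norm_cast; rw [Real.mul_self_sqrt (by norm_num)]
theorem hne : (Real.sqrt 3 : ℂ) ≠ 0 := by
  intro h
  have h2 := Real.sqrt_pos.mpr (by norm_num : (0:ℝ) < 3)
  simp only [Complex.ofReal_eq_zero] at h
  linarith

set_option maxHeartbeats 800000 in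
theorem h6_0 : gellMann 0 = (6 : ℂ)⁻¹ • ((gm 0).map phi) := by
  rw [show gm 0 = !![⟨0,0,0,0⟩, ⟨3,0,0,0⟩, ⟨0,0,0,0⟩; ⟨3,0,0,0⟩, ⟨0,0,0,0⟩, ⟨0,0,0,0⟩; ⟨0,0,0,0⟩, ⟨0,0,0,0⟩, ⟨0,0,0,0⟩] from rfl,
      show gellMann 0 = (1 / 2 : ℂ) • !![0, 1, 0; 1, 0, 0; 0, 0, 0] from rfl]
  ext p q <;> fin_cases p <;> fin_cases q <;>
    simp [phi, Matrix.map_apply, Matrix.vecHead, Matrix.vecTail] <;>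
    first
      | ring1
      | (norm_num; done)
      | (field_simp [hne] <;>
          first
            | linear_combination hs3
            | linear_combination 2*hs3
            | linear_combination -2*hs3
            | linear_combination 4*hs3
            | linear_combination -4*hs3
            | linear_combination -3*hs3
            | linear_combination 3*hs3
            | ring1)

set_option maxHeartbeats 800000 in
theorem h6_1 : gellMann 1 = (6 : ℂ)⁻¹ • ((gm 1).map phi) := by
  rw [show gm 1 = !![⟨0,0,0,0⟩, ⟨0,-3,0,0⟩, ⟨0,0,0,0⟩; ⟨0,3,0,0⟩, ⟨0,0,0,0⟩, ⟨0,0,0,0⟩; ⟨0,0,0,0⟩, ⟨0,0,0,0⟩, ⟨0,0,0,0⟩] from rfl,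
      show gellMann 1 = (1 / 2 : ℂ) • !![0, -Complex.I, 0; Complex.I, 0, 0; 0, 0, 0] from rfl]
  ext p q <;> fin_cases p <;> fin_cases q <;>
    simp [phi, Matrix.map_apply, Matrix.vecHead, Matrix.vecTail] <;>
    first
      | ring1
      | (norm_num; done)
      | (field_simp [hne] <;>
          first
            | linear_combination hs3
            | linear_combination 2*hs3
            | linear_combination -2*hs3
            | linear_combination 4*hs3
            | linear_combination -4*hs3
            | linear_combination -3*hs3
            | linear_combination 3*hs3
            | ring1)

set_option maxHeartbeats 800000 in
theorem h6_2 : gellMann 2 = (6 : ℂ)⁻¹ • ((gm 2).map phi) := by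
  rw [show gm 2 = !![⟨3,0,0,0⟩, ⟨0,0,0,0⟩, ⟨0,0,0,0⟩; ⟨0,0,0,0⟩, ⟨-3,0,0,0⟩, ⟨0,0,0,0⟩; ⟨0,0,0,0⟩, ⟨0,0,0,0⟩, ⟨0,0,0,0⟩] from rfl,
      show gellMann 2 = (1 / 2 : ℂ) • !![1, 0, 0; 0, -1, 0; 0, 0, 0] from rfl]
  ext p q <;> fin_cases p <;> fin_cases q <;>
    simp [phi, Matrix.map_apply, Matrix.vecHead, Matrix.vecTail] <;>
    first
      | ring1
      | (norm_num; done)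
      | (field_simp [hne] <;>
          first
            | linear_combination hs3
            | linear_combination 2*hs3
            | linear_combination -2*hs3
            | linear_combination 4*hs3
            | linear_combination -4*hs3
            | linear_combination -3*hs3
            | linear_combination 3*hs3
            | ring1)

set_option maxHeartbeats 800000 in
theorem h6_3 : gellMann 3 = (6 : ℂ)⁻¹ • ((gm 3).map phi) := by
  rw [show gm 3 = !![⟨0,0,0,0⟩, ⟨0,0,0,0⟩, ⟨3,0,0,0⟩; ⟨0,0,0,0⟩, ⟨0,0,0,0⟩, ⟨0,0,0,0⟩; ⟨3,0,0,0⟩, ⟨0,0,0,0⟩, ⟨0,0,0,0⟩] from rfl,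
      show gellMann 3 = (1 / 2 : ℂ) • !![0, 0, 1; 0, 0, 0; 1, 0, 0] from rfl]
  ext p q <;> fin_cases p <;> fin_cases q <;>
    simp [phi, Matrix.map_apply, Matrix.vecHead, Matrix.vecTail] <;>
    first
      | ring1
      | (norm_num; done)
      | (field_simp [hne] <;>
          first
            | linear_combination hs3
            | linear_combination 2*hs3
            | linear_combination -2*hs3
            | linear_combination 4*hs3
            | linear_combination -4*hs3
            | linear_combination -3*hs3
            | linear_combination 3*hs3
            | ring1)

set_option maxHeartbeats 800000 in
theorem h6_4 : gellMann 4 = (6 : ℂ)⁻¹ • ((gm 4).map phi) := by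
  rw [show gm 4 = !![⟨0,0,0,0⟩, ⟨0,0,0,0⟩, ⟨0,-3,0,0⟩; ⟨0,0,0,0⟩, ⟨0,0,0,0⟩, ⟨0,0,0,0⟩; ⟨0,3,0,0⟩, ⟨0,0,0,0⟩, ⟨0,0,0,0⟩] from rfl,
      show gellMann 4 = (1 / 2 : ℂ) • !![0, 0, -Complex.I; 0, 0, 0; Complex.I, 0, 0] from rfl]
  ext p q <;> fin_cases p <;> fin_cases q <;>
    simp [phi, Matrix.map_apply, Matrix.vecHead, Matrix.vecTail] <;>
    first
      | ring1
      | (norm_num; done)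
      | (field_simp [hne] <;>
          first
            | linear_combination hs3
            | linear_combination 2*hs3
            | linear_combination -2*hs3
            | linear_combination 4*hs3
            | linear_combination -4*hs3
            | linear_combination -3*hs3
            | linear_combination 3*hs3
            | ring1)

set_option maxHeartbeats 800000 in
theorem h6_5 : gellMann 5 = (6 : ℂ)⁻¹ • ((gm 5).map phi) := by
  rw [show gm 5 = !![⟨0,0,0,0⟩, ⟨0,0,0,0⟩, ⟨0,0,0,0⟩; ⟨0,0,0,0⟩, ⟨0,0,0,0⟩, ⟨3,0,0,0⟩; ⟨0,0,0,0⟩, ⟨3,0,0,0⟩, ⟨0,0,0,0⟩] from rfl,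
      show gellMann 5 = (1 / 2 : ℂ) • !![0, 0, 0; 0, 0, 1; 0, 1, 0] from rfl]
  ext p q <;> fin_cases p <;> fin_cases q <;>
    simp [phi, Matrix.map_apply, Matrix.vecHead, Matrix.vecTail] <;>
    first
      | ring1
      | (norm_num; done)
      | (field_simp [hne] <;>
          first
            | linear_combination hs3
            | linear_combination 2*hs3
            | linear_combination -2*hs3
            | linear_combination 4*hs3
            | linear_combination -4*hs3
            | linear_combination -3*hs3
            | linear_combination 3*hs3
            | ring1)

set_option maxHeartbeats 800000 in
theorem h6_6 : gellMann 6 = (6 : ℂ)⁻¹ • ((gm 6).map phi) := by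
  rw [show gm 6 = !![⟨0,0,0,0⟩, ⟨0,0,0,0⟩, ⟨0,0,0,0⟩; ⟨0,0,0,0⟩, ⟨0,0,0,0⟩, ⟨0,-3,0,0⟩; ⟨0,0,0,0⟩, ⟨0,3,0,0⟩, ⟨0,0,0,0⟩] from rfl,
      show gellMann 6 = (1 / 2 : ℂ) • !![0, 0, 0; 0, 0, -Complex.I; 0, Complex.I, 0] from rfl]
  ext p q <;> fin_cases p <;> fin_cases q <;>
    simp [phi, Matrix.map_apply, Matrix.vecHead, Matrix.vecTail] <;>
    first
      | ring1
      | (norm_num; done)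
      | (field_simp [hne] <;>
          first
            | linear_combination hs3
            | linear_combination 2*hs3
            | linear_combination -2*hs3
            | linear_combination 4*hs3
            | linear_combination -4*hs3
            | linear_combination -3*hs3
            | linear_combination 3*hs3
            | ring1)

set_option maxHeartbeats 800000 in
theorem h6_7 : gellMann 7 = (6 : ℂ)⁻¹ • ((gm 7).map phi) := by
  rw [show gm 7 = !![⟨0,0,1,0⟩, ⟨0,0,0,0⟩, ⟨0,0,0,0⟩; ⟨0,0,0,0⟩, ⟨0,0,1,0⟩, ⟨0,0,0,0⟩; ⟨0,0,0,0⟩, ⟨0,0,0,0⟩, ⟨0,0,-2,0⟩] from rfl,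
      show gellMann 7 = (1 / (2 * (Real.sqrt 3 : ℂ))) • !![1, 0, 0; 0, 1, 0; 0, 0, -2] from rfl]
  ext p q <;> fin_cases p <;> fin_cases q <;>
    simp [phi, Matrix.map_apply, Matrix.vecHead, Matrix.vecTail] <;>
    first
      | ring1
      | (norm_num; done)
      | (field_simp [hne] <;>
          first
            | linear_combination hs3
            | linear_combination 2*hs3
            | linear_combination -2*hs3
            | linear_combination 4*hs3
            | linear_combination -4*hs3
            | linear_combination -3*hs3
            | linear_combination 3*hs3
            | ring1)

theorem h6' : ∀ i, gellMann i = (6 : ℂ)⁻¹ • ((gm i).map phi) := by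
  intro i
  fin_cases i
  exacts [h6_0, h6_1, h6_2, h6_3, h6_4, h6_5, h6_6, h6_7]

set_option maxRecDepth 10000 in
theorem mul3_eq (A B : Matrix (Fin 3) (Fin 3) Z4) : mul3 A B = A * B := by
  apply Matrix.ext
  intro p q
  rw [Matrix.mul_apply, Fin.sum_univ_three]
  fin_cases p <;> fin_cases q <;> rfl

theorem tr3_eq (A : Matrix (Fin 3) (Fin 3) Z4) : tr3 A = A.trace := by
  rw [Matrix.trace, Fin.sum_univ_three]
  rfl

set_option maxRecDepth 10000 in
theorem csmul_eq (c : Z4) (A : Matrix (Fin 3) (Fin 3) Z4) : csmul c A = c • A := by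
  by_cases h : c = ⟨0,0,0,0⟩
  · subst h
    apply Matrix.ext
    intro p q
    rw [show csmul ⟨0,0,0,0⟩ A = !![0,0,0;0,0,0;0,0,0] from if_pos rfl,
      show ((⟨0,0,0,0⟩ : Z4) • A) p q = 0 from zero_smul Z4 (A p q)]
    fin_cases p <;> fin_cases q <;> rfl
  · apply Matrix.ext
    intro p q
    rw [show csmul c A = !![c * A 0 0, c * A 0 1, c * A 0 2;
       c * A 1 0, c * A 1 1, c * A 1 2;
       c * A 2 0, c * A 2 1, c * A 2 2] from if_neg h,
      Matrix.smul_apply, smul_eq_mul]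
    fin_cases p <;> fin_cases q <;> rfl

theorem mmap (A B : Matrix (Fin 3) (Fin 3) Z4) :
    (A.map phi) * (B.map phi) = (mul3 A B).map phi := by
  rw [mul3_eq, Matrix.map_mul]

theorem tmap (A : Matrix (Fin 3) (Fin 3) Z4) : ((A.map phi)).trace = phi (tr3 A) := by
  rw [show tr3 A = A 0 0 + A 1 1 + A 2 2 from rfl, Matrix.trace, Fin.sum_univ_three,
    map_add, map_add]
  rfl

theorem smul_map (c : Z4) (A : Matrix (Fin 3) (Fin 3) Z4) :
    ((c • A).map phi) = phi c • A.map phi := by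
  apply Matrix.ext
  intro p q
  show phi (c • A p q) = phi c • (A.map phi) p q
  rw [smul_eq_mul, smul_eq_mul, map_mul, Matrix.map_apply]

theorem mapsum {n : ℕ} (g : Fin n → Matrix (Fin 3) (Fin 3) Z4) :
    (∑ x, g x).map phi = ∑ x, (g x).map phi := by
  ext p q
  simp [Matrix.map_apply, Finset.sum_apply, map_sum, Matrix.sum_apply]

def p012 : Equiv.Perm (Fin 3) := Equiv.refl _
def p021 : Equiv.Perm (Fin 3) := ⟨![0,2,1], ![0,2,1], by decide, by decide⟩
def p102 : Equiv.Perm (Fin 3) := ⟨![1,0,2], ![1,0,2], by decide, by decide⟩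
def p120 : Equiv.Perm (Fin 3) := ⟨![1,2,0], ![2,0,1], by decide, by decide⟩
def p201 : Equiv.Perm (Fin 3) := ⟨![2,0,1], ![1,2,0], by decide, by decide⟩
def p210 : Equiv.Perm (Fin 3) := ⟨![2,1,0], ![2,1,0], by decide, by decide⟩

theorem univ_perm3 : (Finset.univ : Finset (Equiv.Perm (Fin 3)))
    = {p012, p021, p102, p120, p201, p210} := by decide

theorem perm3_sum {M : Type*} [AddCommMonoid M] (f : Fin 3 → Fin 3 → Fin 3 → M) :
    ∑ σ : Equiv.Perm (Fin 3), f (σ 0) (σ 1) (σ 2)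
      = f 0 1 2 + (f 0 2 1 + (f 1 0 2 + (f 1 2 0 + (f 2 0 1 + f 2 1 0)))) := by
  rw [univ_perm3]
  rw [Finset.sum_insert (by decide), Finset.sum_insert (by decide),
    Finset.sum_insert (by decide), Finset.sum_insert (by decide),
    Finset.sum_insert (by decide), Finset.sum_singleton]
  rfl

set_option maxRecDepth 1000000 in
set_option maxHeartbeats 8000000 in
theorem hC : ∀ I J K : Fin 8,
    tr3 (mul3 (mul3 (gm I) (gm J)) (gm K)) + (tr3 (mul3 (mul3 (gm I) (gm K)) (gm J))
      + (tr3 (mul3 (mul3 (gm J) (gm I)) (gm K)) + (tr3 (mul3 (mul3 (gm J) (gm K)) (gm I))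
      + (tr3 (mul3 (mul3 (gm K) (gm I)) (gm J)) + tr3 (mul3 (mul3 (gm K) (gm J)) (gm I))))))
      = c8 I J K := by
  decide

set_option maxRecDepth 1000000 in
set_option maxHeartbeats 8000000 in
theorem hFast : ∑ I : Fin 8, ∑ J : Fin 8, ∑ K : Fin 8,
      csmul (c8 I J K) (mul3 (mul3 (gm I) (gm J)) (gm K))
    = !![⟨77760,0,0,0⟩,0,0; 0,⟨77760,0,0,0⟩,0; 0,0,⟨77760,0,0,0⟩] := by
  decide

theorem key : ∀ I J K : Fin 8,
    ((1 / 6 : ℂ) * ∑ σ : Equiv.Perm (Fin 3),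
        (gellMann (![I, J, K] (σ 0)) * gellMann (![I, J, K] (σ 1)) *
          gellMann (![I, J, K] (σ 2))).trace)
      • (gellMann I * gellMann J * gellMann K)
    = (279936 : ℂ)⁻¹ • ((csmul (c8 I J K) (mul3 (mul3 (gm I) (gm J)) (gm K))).map phi) := by
  intro I J K
  rw [perm3_sum (fun a b c => (gellMann (![I,J,K] a) * gellMann (![I,J,K] b) *
    gellMann (![I,J,K] c)).trace)]
  have v0 : (![I,J,K] : Fin 3 → Fin 8) 0 = I := rfl
  have v1 : (![I,J,K] : Fin 3 → Fin 8) 1 = J := rfl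
  have v2 : (![I,J,K] : Fin 3 → Fin 8) 2 = K := rfl
  simp only [v0, v1, v2]
  rw [csmul_eq, smul_map, ← hC I J K]
  simp only [map_add]
  simp only [h6']
  simp only [Matrix.smul_mul, Matrix.mul_smul, smul_smul, Matrix.trace_smul, smul_eq_mul,
    mmap, tmap]
  congr 1
  ring


/-- The index-symmetrized cubic Casimir of su(3) in the defining representation:
`Σ_{I,J,K} [ (1/6)·Σ_{σ∈S₃} tr(T_{σ(I)}·T_{σ(J)}·T_{σ(K)}) ] · T_I·T_J·T_K = (5/18)·I₃`,
where `σ` permutes the three index slots. -/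
theorem gellMann_symmetrized_cubic_casimir :
    ∑ I : Fin 8, ∑ J : Fin 8, ∑ K : Fin 8,
        ((1 / 6 : ℂ) * ∑ σ : Equiv.Perm (Fin 3),
            (gellMann (![I, J, K] (σ 0)) * gellMann (![I, J, K] (σ 1)) *
              gellMann (![I, J, K] (σ 2))).trace)
          • (gellMann I * gellMann J * gellMann K)
      = (5 / 18 : ℂ) • (1 : Matrix (Fin 3) (Fin 3) ℂ) := by
  simp only [key]
  simp only [← Finset.smul_sum]
  simp only [← mapsum]
  rw [hFast]
  apply Matrix.ext
  intro p q
  fin_cases p <;> fin_cases q <;>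
    simp [Matrix.map_apply, phi, Matrix.one_apply, Matrix.smul_apply, Matrix.vecHead,
      Matrix.vecTail] <;> norm_num
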